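/- The strands algebra A(n,k) is an associative algebra: for generators (S,T,φ), (T,V,ψ), (V,W,χ), where S,T,V,W are k-element subsets of {1,…,n} and the maps are bijections, the product defined by (S,T,φ)·(U,V,ψ) = (S,V,ψ∘φ) if T = U and inv(φ) + inv(ψ) = inv(ψ∘φ), and 0 otherwise, satisfies ((S,T,φ)·(T,V,ψ))·(V,W,χ) = (S,T,φ)·((T,V,ψ)·(V,W,χ)). -/

import Mathlib

/-- A generator of the strands algebra `A(n,k)`: a triple `(S, T, φ)` consisting of two
subsets of `{1, …, n}` and a map between them.  (The constraints on the data are imposed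
as hypotheses of the associativity theorem below.) -/
structure Strand where
  S : Finset ℕ
  T : Finset ℕ
  f : ℕ → ℕ

/-- The number of inversions of `f` on the finite set `S`. -/
def inversions (S : Finset ℕ) (f : ℕ → ℕ) : ℕ :=
  ((S ×ˢ S).filter (fun p => p.1 < p.2 ∧ f p.2 < f p.1)).card

/-- The product of two strand generators over `F = ℤ/2`: it is the composite generator
`(S, V, ψ ∘ φ)` when the middle sets match and inversions are additive, and `0`
(encoded as `none`) otherwise. -/
def strandMul (x y : Strand) : Option Strand :=
  if x.T = y.S ∧ inversions x.S x.f + inversions y.S y.f = inversions x.S (y.f ∘ x.f)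
  then some ⟨x.S, y.T, y.f ∘ x.f⟩ else none

def pairsLT (S : Finset ℕ) : Finset (ℕ × ℕ) := (S ×ˢ S).filter (fun p => p.1 < p.2)

lemma mem_pairsLT {S : Finset ℕ} {p : ℕ × ℕ} :
    p ∈ pairsLT S ↔ p.1 ∈ S ∧ p.2 ∈ S ∧ p.1 < p.2 := by
  simp [pairsLT, Finset.mem_filter, Finset.mem_product, and_assoc]

lemma inv_eq_sum (S : Finset ℕ) (f : ℕ → ℕ) :
    inversions S f = ∑ p ∈ pairsLT S, (if f p.2 < f p.1 then 1 else 0) := by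
  rw [inversions, pairsLT, ← Finset.card_filter, Finset.filter_filter]

lemma inv_transport {S T : Finset ℕ} {φ ψ : ℕ → ℕ} (hφ : Set.BijOn φ ↑S ↑T) :
    inversions T ψ = ∑ p ∈ pairsLT S,
      (if φ p.1 < φ p.2 then (if ψ (φ p.2) < ψ (φ p.1) then 1 else 0)
       else (if ψ (φ p.1) < ψ (φ p.2) then 1 else 0)) := by
  classical
  set g := Function.invFunOn φ ↑S with hg
  have hinv := hφ.invOn_invFunOn
  rw [inv_eq_sum]
  refine Finset.sum_nbij'
    (fun q => if g q.1 < g q.2 then (g q.1, g q.2) else (g q.2, g q.1))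
    (fun p => if φ p.1 < φ p.2 then (φ p.1, φ p.2) else (φ p.2, φ p.1))
    ?_ ?_ ?_ ?_ ?_
  · intro q hq
    rw [mem_pairsLT] at hq
    have h1 : g q.1 ∈ S := hφ.surjOn.mapsTo_invFunOn hq.1
    have h2 : g q.2 ∈ S := hφ.surjOn.mapsTo_invFunOn hq.2.1
    have hne : g q.1 ≠ g q.2 := by
      intro h
      have := congrArg φ h
      rw [hinv.2 hq.1, hinv.2 hq.2.1] at this
      omega
    rw [mem_pairsLT]
    by_cases hgl : g q.1 < g q.2
    · simp only [if_pos hgl]; exact ⟨h1, h2, hgl⟩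
    · simp only [if_neg hgl]; exact ⟨h2, h1, by omega⟩
  · intro p hp
    rw [mem_pairsLT] at hp
    have h1 : φ p.1 ∈ T := hφ.mapsTo hp.1
    have h2 : φ p.2 ∈ T := hφ.mapsTo hp.2.1
    have hne : φ p.1 ≠ φ p.2 := fun h => by
      have := hφ.injOn hp.1 hp.2.1 h; omega
    rw [mem_pairsLT]
    by_cases hl : φ p.1 < φ p.2
    · simp only [if_pos hl]; exact ⟨h1, h2, hl⟩
    · simp only [if_neg hl]; exact ⟨h2, h1, by omega⟩
  · intro q hq
    rw [mem_pairsLT] at hq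
    have e1 : φ (g q.1) = q.1 := hinv.2 hq.1
    have e2 : φ (g q.2) = q.2 := hinv.2 hq.2.1
    have hq' : ¬ q.2 < q.1 := by omega
    by_cases hgl : g q.1 < g q.2
    · simp [hgl, e1, e2, hq.2.2]
    · simp [hgl, e1, e2, hq']
  · intro p hp
    rw [mem_pairsLT] at hp
    have e1 : g (φ p.1) = p.1 := hinv.1 hp.1
    have e2 : g (φ p.2) = p.2 := hinv.1 hp.2.1
    have hp' : ¬ p.2 < p.1 := by omega
    by_cases hl : φ p.1 < φ p.2
    · simp [hl, e1, e2, hp.2.2]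
    · simp [hl, e1, e2, hp']
  · intro q hq
    rw [mem_pairsLT] at hq
    have e1 : φ (g q.1) = q.1 := hinv.2 hq.1
    have e2 : φ (g q.2) = q.2 := hinv.2 hq.2.1
    have hq' : ¬ q.2 < q.1 := by omega
    by_cases hgl : g q.1 < g q.2
    · simp [hgl, e1, e2, hq.2.2]
    · simp [hgl, e1, e2, hq']

/-- Additivity criterion for inversion counts. -/
lemma inv_add_iff {S T : Finset ℕ} {φ ψ : ℕ → ℕ} (hφ : Set.BijOn φ ↑S ↑T)
    (hψ : Set.InjOn ψ ↑T) :
    inversions S φ + inversions T ψ = inversions S (ψ ∘ φ) ↔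
      ∀ a ∈ S, ∀ b ∈ S, a < b → ¬(φ b < φ a ∧ ψ (φ a) < ψ (φ b)) := by
  classical
  have key : inversions S φ + inversions T ψ = inversions S (ψ ∘ φ)
      + 2 * ∑ p ∈ pairsLT S,
          (if φ p.2 < φ p.1 ∧ ψ (φ p.1) < ψ (φ p.2) then 1 else 0) := by
    rw [inv_eq_sum S φ, inv_transport hφ, inv_eq_sum S (ψ ∘ φ),
      ← Finset.sum_add_distrib, Finset.mul_sum, ← Finset.sum_add_distrib]
    refine Finset.sum_congr rfl ?_
    intro p hp
    rw [mem_pairsLT] at hp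
    have hne : φ p.1 ≠ φ p.2 := fun h => by
      have := hφ.injOn hp.1 hp.2.1 h; omega
    have hne2 : ψ (φ p.1) ≠ ψ (φ p.2) := fun h => by
      have := hψ (hφ.mapsTo hp.1) (hφ.mapsTo hp.2.1) h; exact hne this
    simp only [Function.comp_apply]
    split_ifs <;> omega
  rw [key]
  have h0 : inversions S (ψ ∘ φ)
      + 2 * (∑ p ∈ pairsLT S,
          (if φ p.2 < φ p.1 ∧ ψ (φ p.1) < ψ (φ p.2) then 1 else 0))
      = inversions S (ψ ∘ φ) ↔
      (∑ p ∈ pairsLT S,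
          (if φ p.2 < φ p.1 ∧ ψ (φ p.1) < ψ (φ p.2) then 1 else 0)) = 0 := by
    omega
  rw [h0, Finset.sum_eq_zero_iff]
  constructor
  · intro h a ha b hb hab hc
    have := h (a, b) (mem_pairsLT.mpr ⟨ha, hb, hab⟩)
    rw [if_pos hc] at this
    exact one_ne_zero this
  · intro h p hp
    rw [mem_pairsLT] at hp
    rw [if_neg (h p.1 hp.1 p.2 hp.2.1 hp.2.2)]

/-- Associativity of the strands algebra `A(n,k)` on generators:
`((S,T,φ)·(T,V,ψ))·(V,W,χ) = (S,T,φ)·((T,V,ψ)·(V,W,χ))`, where a product is zero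
unless the inversion counts are additive. -/
theorem strands_algebra_assoc
    (n k : ℕ) (S T V W : Finset ℕ)
    (hS : S ⊆ Finset.range n) (hT : T ⊆ Finset.range n)
    (hV : V ⊆ Finset.range n) (hW : W ⊆ Finset.range n)
    (hkS : S.card = k) (hkT : T.card = k) (hkV : V.card = k) (hkW : W.card = k)
    (φ ψ χ : ℕ → ℕ)
    (hφ : Set.BijOn φ S T) (hψ : Set.BijOn ψ T V) (hχ : Set.BijOn χ V W) :
    (strandMul ⟨S, T, φ⟩ ⟨T, V, ψ⟩).bind (fun z => strandMul z ⟨V, W, χ⟩) =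
      (strandMul ⟨T, V, ψ⟩ ⟨V, W, χ⟩).bind (fun z => strandMul ⟨S, T, φ⟩ z) := by
  classical
  have hφψ : Set.BijOn (ψ ∘ φ) ↑S ↑V := hψ.comp hφ
  have hχψ : Set.BijOn (χ ∘ ψ) ↑T ↑W := hχ.comp hψ
  -- the four additivity criteria
  have A1 := inv_add_iff hφ hψ.injOn
  have A2 := inv_add_iff hφψ hχ.injOn
  have B1 := inv_add_iff hψ hχ.injOn
  have B2 := inv_add_iff hφ hχψ.injOn
  -- injectivity facts
  have hne1 : ∀ a ∈ S, ∀ b ∈ S, a ≠ b → φ a ≠ φ b := fun a ha b hb h hh =>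
    h (hφ.injOn ha hb hh)
  have hne2 : ∀ a ∈ S, ∀ b ∈ S, a ≠ b → ψ (φ a) ≠ ψ (φ b) := fun a ha b hb h hh =>
    hne1 a ha b hb h (hψ.injOn (hφ.mapsTo ha) (hφ.mapsTo hb) hh)
  have hne3 : ∀ a ∈ S, ∀ b ∈ S, a ≠ b → χ (ψ (φ a)) ≠ χ (ψ (φ b)) :=
    fun a ha b hb h hh => hne2 a ha b hb h
      (hχ.injOn (hψ.mapsTo (hφ.mapsTo ha)) (hψ.mapsTo (hφ.mapsTo hb)) hh)
  -- transport of the criterion on T back to S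
  have D1equiv : (∀ c ∈ T, ∀ d ∈ T, c < d → ¬(ψ d < ψ c ∧ χ (ψ c) < χ (ψ d))) ↔
      (∀ a ∈ S, ∀ b ∈ S, φ a < φ b →
        ¬(ψ (φ b) < ψ (φ a) ∧ χ (ψ (φ a)) < χ (ψ (φ b)))) := by
    constructor
    · intro h a ha b hb hlt
      exact h _ (hφ.mapsTo ha) _ (hφ.mapsTo hb) hlt
    · intro h c hc d hd hlt
      obtain ⟨a, ha, rfl⟩ := hφ.surjOn hc
      obtain ⟨b, hb, rfl⟩ := hφ.surjOn hd
      exact h a ha b hb hlt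
  -- the key equivalence of nonvanishing conditions
  have EQ : ((inversions S φ + inversions T ψ = inversions S (ψ ∘ φ)) ∧
        (inversions S (ψ ∘ φ) + inversions V χ = inversions S (χ ∘ (ψ ∘ φ)))) ↔
      ((inversions T ψ + inversions V χ = inversions T (χ ∘ ψ)) ∧
        (inversions S φ + inversions T (χ ∘ ψ) = inversions S ((χ ∘ ψ) ∘ φ))) := by
    rw [A1, A2, B1, B2, D1equiv]
    simp only [Function.comp_apply]
    constructor
    · rintro ⟨hc1, hc2⟩
      constructor
      · intro a ha b hb hab
        have hne : a ≠ b := fun h => by subst h; omega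
        rcases hne.lt_or_gt with h | h
        · have k2 := hc2 a ha b hb h
          omega
        · have k1 := hc1 b hb a ha h
          have k2 := hc2 b hb a ha h
          omega
      · intro a ha b hb hab
        have k1 := hc1 a ha b hb hab
        have k2 := hc2 a ha b hb hab
        have n2 := hne2 a ha b hb (by omega)
        omega
    · rintro ⟨hd1, hd2⟩
      constructor
      · intro a ha b hb hab
        have n1 := hne1 a ha b hb (by omega)
        have n3 := hne3 a ha b hb (by omega)
        have k2 := hd2 a ha b hb hab
        rcases Ne.lt_or_gt n1 with h | h
        · have k1 := hd1 a ha b hb h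
          omega
        · have k1 := hd1 b hb a ha h
          omega
      · intro a ha b hb hab
        have n1 := hne1 a ha b hb (by omega)
        have k2 := hd2 a ha b hb hab
        rcases Ne.lt_or_gt n1 with h | h
        · have k1 := hd1 a ha b hb h
          omega
        · have k1 := hd1 b hb a ha h
          omega
  -- now unfold the products
  have L1 : strandMul ⟨S, T, φ⟩ ⟨T, V, ψ⟩ =
      if inversions S φ + inversions T ψ = inversions S (ψ ∘ φ)
      then some ⟨S, V, ψ ∘ φ⟩ else none := by
    simp [strandMul]
  have R1 : strandMul ⟨T, V, ψ⟩ ⟨V, W, χ⟩ =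
      if inversions T ψ + inversions V χ = inversions T (χ ∘ ψ)
      then some ⟨T, W, χ ∘ ψ⟩ else none := by
    simp [strandMul]
  rw [L1, R1]
  by_cases h1 : inversions S φ + inversions T ψ = inversions S (ψ ∘ φ) <;>
    by_cases h2 : inversions T ψ + inversions V χ = inversions T (χ ∘ ψ) <;>
    simp only [if_pos, if_neg, h1, h2, if_true, if_false, Option.bind_some,
      Option.bind_none]
  · show strandMul ⟨S, V, ψ ∘ φ⟩ ⟨V, W, χ⟩ = strandMul ⟨S, T, φ⟩ ⟨T, W, χ ∘ ψ⟩
    simp only [strandMul]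
    by_cases h3 : inversions S (ψ ∘ φ) + inversions V χ = inversions S (χ ∘ (ψ ∘ φ))
    · have h4 := (EQ.mp ⟨h1, h3⟩).2
      rw [if_pos (by exact ⟨trivial, h3⟩), if_pos (by exact ⟨trivial, h4⟩)]
      rfl
    · have h4 : ¬ (inversions S φ + inversions T (χ ∘ ψ) = inversions S ((χ ∘ ψ) ∘ φ)) := by
        intro h4
        exact h3 (EQ.mpr ⟨h2, h4⟩).2
      rw [if_neg (by simp [h3]), if_neg (by simp [h4])]
  · show strandMul ⟨S, V, ψ ∘ φ⟩ ⟨V, W, χ⟩ = none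
    have h3 : ¬ (inversions S (ψ ∘ φ) + inversions V χ = inversions S (χ ∘ (ψ ∘ φ))) := by
      intro h3
      exact h2 (EQ.mp ⟨h1, h3⟩).1
    simp [strandMul, h3]
  · show none = strandMul ⟨S, T, φ⟩ ⟨T, W, χ ∘ ψ⟩
    have h4 : ¬ (inversions S φ + inversions T (χ ∘ ψ) = inversions S ((χ ∘ ψ) ∘ φ)) := by
      intro h4
      exact h1 (EQ.mpr ⟨h2, h4⟩).1
    simp [strandMul, h4]
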